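/- Let n > 1 be a positive integer with prime factorization n = ∏_{i=1}^ℓ p_i^{a_i}, where p_1 < p_2 < ⋯ < p_ℓ and a_ℓ = 1. If p_i − 1 = ∏_{j=1}^{i−1} p_j^{a_j} for every 1 ≤ i < ℓ, and p_ℓ + 1 = n/p_ℓ, then ∑_{p^k ∣ n} 1/p^k − 1/n = 1, where the sum ranges over all prime power divisors p^k of n; in particular n is a prime power Giuga number. -/

import Mathlib

/-- The map `f` from the paper: `f n = n - 1` if `n` is prime, and otherwise
`f n = n - d n` where `d n = n / n.minFac` is the largest divisor `d` of `n`
with `1 < d < n`. -/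
def egf (n : ℕ) : ℕ := if n.Prime then n - 1 else n - n / n.minFac

/-- `F n = {n, f n, f (f n), …, 1}`: the set of iterates of `f` starting at `n`
(the iterates strictly decrease to `1`; we collect all positive iterates). -/
def Fset (n : ℕ) : Set ℕ := {m | 0 < m ∧ ∃ i : ℕ, egf^[i] n = m}

/-- The sum `∑_{p^k ∣ n} 1/p^k` over all prime power divisors `p^k` of `n`. -/
def ppSum (n : ℕ) : ℚ := ∑ d ∈ n.divisors.filter (fun d => IsPrimePow d), (1 : ℚ) / d

/-- A prime power pseudoperfect number: `n > 1` with `∑_{p^k ∣ n} 1/p^k + 1/n = 1`. -/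
def PPPseudoperfect (n : ℕ) : Prop := 1 < n ∧ ppSum n + 1 / n = 1

/-- A prime power Giuga number: a composite `n` with `∑_{p^k ∣ n} 1/p^k - 1/n` a positive integer. -/
def PPGiuga (n : ℕ) : Prop :=
  1 < n ∧ ¬ n.Prime ∧ ∃ m : ℕ, 0 < m ∧ ppSum n - 1 / n = m

/-- A primary pseudoperfect number: `n > 1` with `∑_{p ∣ n} 1/p + 1/n = 1`. -/
def PrimaryPseudoperfect (n : ℕ) : Prop :=
  1 < n ∧ (∑ p ∈ n.primeFactors, (1 : ℚ) / p) + 1 / n = 1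

/-- A Giuga number: a composite `n` with `∑_{p ∣ n} 1/p - 1/n` a positive integer. -/
def Giuga (n : ℕ) : Prop :=
  1 < n ∧ ¬ n.Prime ∧ ∃ m : ℕ, 0 < m ∧ (∑ p ∈ n.primeFactors, (1 : ℚ) / p) - 1 / n = m

/-- A pseudoperfect number: a positive integer that is the sum of a nonempty set of
distinct divisors `d` with `0 < d < n`. -/
def Pseudoperfect (n : ℕ) : Prop :=
  0 < n ∧ ∃ s : Finset ℕ, s ⊆ n.properDivisors ∧ s.Nonempty ∧ ∑ d ∈ s, d = n

/-- if `n > 1` has prime factorization `∏ pᵢ^{aᵢ}` with `p₁ < ⋯ < p_ℓ`,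
`a_ℓ = 1`, `pᵢ - 1 = ∏_{j<i} pⱼ^{aⱼ}` for all `i < ℓ`, and `p_ℓ + 1 = n / p_ℓ`,
then `∑_{p^k ∣ n} 1/p^k - 1/n = 1`; in particular `n` is a prime power Giuga number.
Here `q` denotes the largest prime divisor `p_ℓ` of `n`. -/
-- geometric sum lemma
lemma geo (p : ℕ) (hp : 2 ≤ p) (a : ℕ) :
    ∑ k ∈ Finset.Icc 1 a, ((p:ℚ)^k)⁻¹
      = ((p:ℚ)-1)⁻¹ - (((p:ℚ)-1) * (p:ℚ)^a)⁻¹ := by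
  have h0 : (p:ℚ) ≠ 0 := by positivity
  have h1 : (p:ℚ) - 1 ≠ 0 := by
    have : (2:ℚ) ≤ p := by exact_mod_cast hp
    nlinarith
  induction a with
  | zero => simp
  | succ a ih =>
      rw [Finset.sum_Icc_succ_top (by omega), ih]
      have hpa : (p:ℚ)^a ≠ 0 := pow_ne_zero _ h0
      field_simp
      ring

-- telescoping lemma
lemma telescope (f : ℕ → ℚ) (P : Finset ℕ) :
    ∑ p ∈ P, ((∏ r ∈ P.filter (· < p), f r)⁻¹ - (∏ r ∈ P.filter (· ≤ p), f r)⁻¹)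
      = 1 - (∏ r ∈ P, f r)⁻¹ := by
  induction P using Finset.induction_on_max with
  | empty => simp
  | insert a s ha ih =>
      have hanotin : a ∉ s := fun h => lt_irrefl a (ha a h)
      have hlt : (insert a s).filter (· < a) = s := by
        ext x; simp only [Finset.mem_filter, Finset.mem_insert]
        constructor
        · rintro ⟨h1 | h1, h2⟩ <;> [omega; exact h1]
        · intro hx; exact ⟨Or.inr hx, ha x hx⟩
      have hle : (insert a s).filter (· ≤ a) = insert a s := by
        apply Finset.filter_true_of_mem
        intro x hx
        rcases Finset.mem_insert.mp hx with h | h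
        · omega
        · exact le_of_lt (ha x h)
      rw [Finset.sum_insert hanotin, hlt, hle]
      have hsum : ∀ p ∈ s,
          ((∏ r ∈ (insert a s).filter (· < p), f r)⁻¹ - (∏ r ∈ (insert a s).filter (· ≤ p), f r)⁻¹)
          = ((∏ r ∈ s.filter (· < p), f r)⁻¹ - (∏ r ∈ s.filter (· ≤ p), f r)⁻¹) := by
        intro p hp
        have hap : p < a := ha p hp
        have e1 : (insert a s).filter (· < p) = s.filter (· < p) := by
          rw [Finset.filter_insert, if_neg (by omega)]
        have e2 : (insert a s).filter (· ≤ p) = s.filter (· ≤ p) := by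
          rw [Finset.filter_insert, if_neg (by omega)]
        rw [e1, e2]
      rw [Finset.sum_congr rfl hsum, ih, Finset.prod_insert hanotin]
      ring

lemma ppSum_eq (n : ℕ) (hn : n ≠ 0) :
    (∑ d ∈ n.divisors.filter (fun d => IsPrimePow d), (1 : ℚ) / d)
      = ∑ p ∈ n.primeFactors, ∑ k ∈ Finset.Icc 1 (n.factorization p), ((p:ℚ)^k)⁻¹ := by
  rw [← Finset.sum_sigma (n.primeFactors) (fun p => Finset.Icc 1 (n.factorization p))
      (fun x => ((x.1:ℚ)^x.2)⁻¹)]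
  refine (Finset.sum_bij (fun x _ => x.1 ^ x.2) ?_ ?_ ?_ ?_).symm
  · rintro ⟨p, k⟩ hx
    rw [Finset.mem_sigma] at hx
    obtain ⟨hp, hk⟩ := hx
    rw [Finset.mem_Icc] at hk
    have hpp : p.Prime := Nat.prime_of_mem_primeFactors hp
    refine Finset.mem_filter.mpr ⟨Nat.mem_divisors.mpr ⟨?_, hn⟩, ?_⟩
    · exact dvd_trans (pow_dvd_pow p hk.2) (Nat.ordProj_dvd n p)
    · exact ⟨p, k, hpp.prime, hk.1, rfl⟩
  · rintro ⟨p, k⟩ hx ⟨p', k'⟩ hx' h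
    rw [Finset.mem_sigma, Finset.mem_Icc] at hx hx'
    have hpp : p.Prime := Nat.prime_of_mem_primeFactors hx.1
    have hpp' : p'.Prime := Nat.prime_of_mem_primeFactors hx'.1
    simp only at h
    have hk1 : 1 ≤ k := hx.2.1
    have hk1' : 1 ≤ k' := hx'.2.1
    have hpeq : p = p' := by
      have h1 : p ∣ p' ^ k' := h ▸ dvd_pow_self p (by omega)
      have := (Nat.Prime.dvd_of_dvd_pow hpp h1)
      exact ((Nat.prime_dvd_prime_iff_eq hpp hpp').mp this)
    subst hpeq
    have : k = k' := Nat.pow_right_injective hpp.two_le h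
    simp [this]
  · intro d hd
    rw [Finset.mem_filter, Nat.mem_divisors] at hd
    obtain ⟨⟨hdvd, _⟩, hppow⟩ := hd
    obtain ⟨p, k, hp, hk, rfl⟩ := hppow
    have hpn : p.Prime := hp.nat_prime
    refine ⟨⟨p, k⟩, Finset.mem_sigma.mpr ⟨?_, Finset.mem_Icc.mpr ⟨hk, ?_⟩⟩, rfl⟩
    · exact Nat.mem_primeFactors.mpr ⟨hpn, dvd_trans (dvd_pow_self p (by omega)) hdvd, hn⟩
    · exact (Nat.Prime.pow_dvd_iff_le_factorization hpn hn).mp hdvd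
  · rintro ⟨p, k⟩ hx
    push_cast
    rw [one_div]

theorem stmt3 (n q : ℕ) (hn : 1 < n)
    (hq : q ∈ n.primeFactors) (hqmax : ∀ p ∈ n.primeFactors, p ≤ q)
    (haℓ : n.factorization q = 1)
    (hcond : ∀ p ∈ n.primeFactors, p ≠ q →
      p - 1 = ∏ r ∈ n.primeFactors.filter (· < p), r ^ n.factorization r)
    (hq1 : q + 1 = n / q) :
    ppSum n - 1 / (n : ℚ) = 1 ∧ PPGiuga n := by
  have hn0 : n ≠ 0 := by omega
  have hqp : q.Prime := Nat.prime_of_mem_primeFactors hq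
  have hqdvd : q ∣ n := Nat.dvd_of_mem_primeFactors hq
  have hq2 : 2 ≤ q := hqp.two_le
  set P := n.primeFactors with hP
  -- n = q * (q + 1)
  have hnqM : n = q * (q + 1) := by
    have h := Nat.div_mul_cancel hqdvd
    rw [← hq1] at h
    rw [← h]; ring
  -- q ∉ filter (· < q)
  have hqnot : q ∉ P.filter (· < q) := by
    simp [Finset.mem_filter]
  -- P = insert q (P.filter (· < q))
  have hPins : P = insert q (P.filter (· < q)) := by
    ext x
    simp only [Finset.mem_insert, Finset.mem_filter]
    constructor
    · intro hx
      rcases eq_or_lt_of_le (hqmax x hx) with h | h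
      · exact Or.inl h
      · exact Or.inr ⟨hx, h⟩
    · rintro (rfl | ⟨hx, _⟩)
      · exact hq
      · exact hx
  -- product over all primes is n
  have hprodall : ∏ r ∈ P, r ^ n.factorization r = n := by
    have h := Nat.factorization_prod_pow_eq_self hn0
    rwa [Finsupp.prod, Nat.support_factorization] at h
  -- product over P.filter (· < q) is q + 1
  have hprodlt : ∏ r ∈ P.filter (· < q), r ^ n.factorization r = q + 1 := by
    have h1 : q ^ n.factorization q * ∏ r ∈ P.filter (· < q), r ^ n.factorization r = n := by
      rw [← Finset.prod_insert (f := fun r => r ^ n.factorization r) hqnot, ← hPins, hprodall]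
    rw [haℓ, pow_one] at h1
    have h2 : q * (q + 1) = q * ∏ r ∈ P.filter (· < q), r ^ n.factorization r :=
      hnqM.symm.trans h1.symm
    exact (Nat.eq_of_mul_eq_mul_left (by omega) h2).symm
  -- rewrite ppSum
  have key : ppSum n = 1 - ((q:ℚ)+1)⁻¹ + ((q:ℚ))⁻¹ := by
    rw [ppSum, ppSum_eq n hn0, ← hP]
    conv_lhs => rw [hPins]
    rw [Finset.sum_insert hqnot, haℓ]
    have hqterm : ∑ k ∈ Finset.Icc 1 1, ((q:ℚ)^k)⁻¹ = ((q:ℚ))⁻¹ := by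
      simp
    rw [hqterm]
    have hmain : ∑ p ∈ P.filter (· < q), ∑ k ∈ Finset.Icc 1 (n.factorization p), ((p:ℚ)^k)⁻¹
        = 1 - ((q:ℚ)+1)⁻¹ := by
      set Q := P.filter (· < q) with hQ
      have hterm : ∀ p ∈ Q,
          ∑ k ∈ Finset.Icc 1 (n.factorization p), ((p:ℚ)^k)⁻¹
          = ((∏ r ∈ Q.filter (· < p), ((r:ℚ) ^ n.factorization r))⁻¹
            - (∏ r ∈ Q.filter (· ≤ p), ((r:ℚ) ^ n.factorization r))⁻¹) := by
        intro p hp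
        rw [hQ, Finset.mem_filter] at hp
        obtain ⟨hpP, hpq⟩ := hp
        have hpprime : p.Prime := Nat.prime_of_mem_primeFactors hpP
        have hc := hcond p hpP (by omega)
        -- filter commutation
        have e1 : Q.filter (· < p) = P.filter (· < p) := by
          rw [hQ, Finset.filter_filter]
          ext x
          simp only [Finset.mem_filter]
          constructor
          · rintro ⟨h1, _, h3⟩; exact ⟨h1, h3⟩
          · rintro ⟨h1, h2⟩; exact ⟨h1, by omega, h2⟩
        have e2 : Q.filter (· ≤ p) = P.filter (· ≤ p) := by
          rw [hQ, Finset.filter_filter]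
          ext x
          simp only [Finset.mem_filter]
          constructor
          · rintro ⟨h1, _, h3⟩; exact ⟨h1, h3⟩
          · rintro ⟨h1, h2⟩; exact ⟨h1, by omega, h2⟩
        have hpnotlt : p ∉ P.filter (· < p) := by simp
        have e3 : P.filter (· ≤ p) = insert p (P.filter (· < p)) := by
          ext x
          simp only [Finset.mem_insert, Finset.mem_filter]
          constructor
          · rintro ⟨hx, hxle⟩
            rcases eq_or_lt_of_le hxle with h | h
            · exact Or.inl h
            · exact Or.inr ⟨hx, h⟩
          · rintro (rfl | ⟨hx, hlt⟩)
            · exact ⟨hpP, le_refl _⟩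
            · exact ⟨hx, le_of_lt hlt⟩
        have hcast : ((p:ℚ) - 1) = ∏ r ∈ P.filter (· < p), ((r:ℚ) ^ n.factorization r) := by
          have h1 : ((p - 1 : ℕ) : ℚ) = ((∏ r ∈ P.filter (· < p), r ^ n.factorization r : ℕ) : ℚ) := by
            exact_mod_cast congrArg (Nat.cast : ℕ → ℚ) hc
          rw [Nat.cast_sub hpprime.one_le, Nat.cast_one] at h1
          rw [h1]
          push_cast
          rfl
        rw [geo p hpprime.two_le, e1, e2, e3, Finset.prod_insert hpnotlt, ← hcast]
        ring_nf
      rw [Finset.sum_congr rfl hterm, telescope]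
      have h := congrArg (fun m : ℕ => (m:ℚ)) hprodlt
      push_cast at h
      rw [h]
    rw [hmain]
    ring
  have hq0 : (q:ℚ) ≠ 0 := by positivity
  have hq10 : (q:ℚ) + 1 ≠ 0 := by positivity
  have hmain : ppSum n - 1 / (n : ℚ) = 1 := by
    rw [key, hnqM]
    push_cast
    field_simp
    ring
  refine ⟨hmain, hn, ?_, 1, one_pos, by rw [hmain]; norm_num⟩
  intro hprime
  rcases (Nat.Prime.eq_one_or_self_of_dvd hprime q hqdvd) with h | h
  · omega
  · rw [h] at hnqM hq2; nlinarith [hnqM, hq2]
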